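/- Let G be a group acting on a type α. Any ternary relation ⫶ on subsets of α satisfying invariance, monotonicity, base monotonicity, extension and local character also satisfies existence. -/
import Mathlib


open scoped Pointwise

universe u

/-- any relation satisfying invariance, monotonicity, base monotonicity,
extension and local character also satisfies existence. -/
theorem stmt_6 {α : Type u} {G : Type*} [Group G] [MulAction G α]
    (ind : Set α → Set α → Set α → Prop)
    (inv : ∀ (g : G) (A B C : Set α), ind A C B → ind (g • A) (g • C) (g • B))
    (mono : ∀ A B C A' B' : Set α, ind A C B → A' ⊆ A → B' ⊆ B → ind A' C B')
    (base : ∀ A B C D : Set α, D ⊆ C → C ⊆ B → ind A D B → ind A C B)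
    (ext : ∀ A B C Bhat : Set α, ind A C B → B ⊆ Bhat →
      ∃ (A' : Set α) (g : G), (∀ x ∈ B ∪ C, g • x = x) ∧ g • A = A' ∧ ind A' C Bhat)
    (loc : ∀ A : Set α, ∃ κ : Cardinal.{u}, ∀ B : Set α,
      ∃ C : Set α, C ⊆ B ∧ Cardinal.mk ↥C < κ ∧ ind A C B) :
    ∀ A B C : Set α,
      ∃ (A' : Set α) (g : G), (∀ x ∈ C, g • x = x) ∧ g • A = A' ∧ ind A' C B := by
  intro A B C
  obtain ⟨κ, hκ⟩ := loc A
  obtain ⟨C', hC'C, -, hind⟩ := hκ C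
  obtain ⟨A', g, hfix, hgA, hind'⟩ := ext A C C' (B ∪ C) hind Set.subset_union_right
  refine ⟨A', g, fun x hx => hfix x (Set.mem_union_left _ hx), hgA, ?_⟩
  exact mono A' (B ∪ C) C A' B
    (base A' (B ∪ C) C C' hC'C Set.subset_union_right hind')
    subset_rfl Set.subset_union_left
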